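/- Let 0 < α < 2 and let n ≥ 1 be an integer. For every (η₁,…,η_{2n+1}) ∈ ℝ^{2n+1}, the integral T_n(η₁,…,η_{2n+1}) = ∫_ℝ [∏_{j=1}^{2n+1}(1 − e^{iη_jζ})] · |ζ|^{α−1} sgn(ζ) · ζ^{−(2n+1)} dζ is absolutely convergent and satisfies |T_n(η₁,…,η_{2n+1})| ≤ (2^{1+α}/α)·∏_{j=1}^{2n+1}|η_j| + 2^{1+α}/(3−α). -/

import Mathlib

open MeasureTheory Set

private lemma norm_one_sub_exp_le_two (t : ℝ) : ‖1 - Complex.exp (Complex.I * t)‖ ≤ 2 := by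
  calc ‖1 - Complex.exp (Complex.I * t)‖
      ≤ ‖(1 : ℂ)‖ + ‖Complex.exp (Complex.I * t)‖ := norm_sub_le _ _
    _ ≤ 2 := by
        rw [norm_one, mul_comm, Complex.norm_exp_ofReal_mul_I]
        norm_num

private lemma norm_one_sub_exp_le_abs (t : ℝ) : ‖1 - Complex.exp (Complex.I * t)‖ ≤ |t| := by
  have h1 : ‖1 - Complex.exp (Complex.I * t)‖ ^ 2 = 2 - 2 * Real.cos t := by
    rw [mul_comm, Complex.sq_norm, Complex.normSq_apply]
    simp only [Complex.sub_re, Complex.sub_im, Complex.one_re, Complex.one_im,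
      Complex.exp_ofReal_mul_I_re, Complex.exp_ofReal_mul_I_im]
    nlinarith [Real.sin_sq_add_cos_sq t]
  have h2 : 2 - 2 * Real.cos t ≤ t ^ 2 := by
    nlinarith [Real.one_sub_sq_div_two_le_cos (x := t)]
  nlinarith [norm_nonneg (1 - Complex.exp (Complex.I * t)), abs_nonneg t, sq_abs t]

open MeasureTheory

/-- For `0 < α < 2` and `n ≥ 1`, the multilinear symbol
`T_n(η₁,…,η_{2n+1}) = ∫_ℝ [∏_j (1 − e^{iη_jζ})]·|ζ|^{α−1} sgn(ζ)·ζ^{−(2n+1)} dζ`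
is absolutely convergent and satisfies
`|T_n| ≤ (2^{1+α}/α)·∏_j |η_j| + 2^{1+α}/(3−α)`. -/
theorem Tn_integrable_and_bound (α : ℝ) (h0 : 0 < α) (h2 : α < 2) (n : ℕ) (hn : 1 ≤ n)
    (η : Fin (2 * n + 1) → ℝ) :
    Integrable (fun ζ : ℝ =>
      (∏ j, (1 - Complex.exp (Complex.I * (η j : ℂ) * (ζ : ℂ)))) *
        ((|ζ| ^ (α - 1) * Real.sign ζ / ζ ^ (2 * n + 1) : ℝ) : ℂ)) ∧
    ‖∫ ζ : ℝ, (∏ j, (1 - Complex.exp (Complex.I * (η j : ℂ) * (ζ : ℂ)))) *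
        ((|ζ| ^ (α - 1) * Real.sign ζ / ζ ^ (2 * n + 1) : ℝ) : ℂ)‖ ≤
      ((2 : ℝ) ^ (1 + α) / α) * ∏ j, |η j| + (2 : ℝ) ^ (1 + α) / (3 - α) := by
  have hk3 : 3 ≤ 2 * n + 1 := by omega
  set A : ℝ := ∏ j, |η j| with hAdef
  have hA0 : 0 ≤ A := Finset.prod_nonneg fun j _ => abs_nonneg _
  set F : ℝ → ℂ := fun ζ : ℝ =>
      (∏ j, (1 - Complex.exp (Complex.I * (η j : ℂ) * (ζ : ℂ)))) *
        ((|ζ| ^ (α - 1) * Real.sign ζ / ζ ^ (2 * n + 1) : ℝ) : ℂ) with hFdef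
  set f : ℝ → ℝ := fun t => if t ≤ 2 then A * t ^ (α - 1) else 8 * t ^ (α - 4) with hfdef
  -- pointwise norm formula
  have hnorm : ∀ ζ : ℝ, ‖F ζ‖ =
      (∏ j, ‖1 - Complex.exp (Complex.I * (η j : ℂ) * (ζ : ℂ))‖) *
        (|ζ| ^ (α - 1) * |Real.sign ζ| / |ζ| ^ (2 * n + 1)) := by
    intro ζ
    rw [hFdef]
    rw [norm_mul, norm_prod, Complex.norm_real, Real.norm_eq_abs, abs_div, abs_mul, abs_pow,
      abs_of_nonneg (Real.rpow_nonneg (abs_nonneg ζ) _)]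
  have hsign : ∀ ζ : ℝ, |Real.sign ζ| ≤ 1 := by
    intro ζ
    rcases Real.sign_apply_eq ζ with h | h | h <;> rw [h] <;> norm_num
  have hP2 : ∀ (ζ : ℝ) (j : Fin (2 * n + 1)),
      ‖1 - Complex.exp (Complex.I * (η j : ℂ) * (ζ : ℂ))‖ ≤ 2 := by
    intro ζ j
    simpa [Complex.ofReal_mul, mul_assoc] using norm_one_sub_exp_le_two (η j * ζ)
  have hPabs : ∀ (ζ : ℝ) (j : Fin (2 * n + 1)),
      ‖1 - Complex.exp (Complex.I * (η j : ℂ) * (ζ : ℂ))‖ ≤ |η j| * |ζ| := by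
    intro ζ j
    have := norm_one_sub_exp_le_abs (η j * ζ)
    rw [abs_mul] at this
    simpa [Complex.ofReal_mul, mul_assoc] using this
  -- the pointwise domination
  have hle : ∀ ζ : ℝ, ‖F ζ‖ ≤ f |ζ| := by
    intro ζ
    by_cases hζ0 : ζ = 0
    · subst hζ0
      have hF0 : F 0 = 0 := by simp [hFdef]
      rw [hF0, norm_zero, abs_zero]
      simp only [hfdef]
      rw [if_pos (by norm_num : (0:ℝ) ≤ 2)]
      positivity
    · have habs : 0 < |ζ| := abs_pos.mpr hζ0
      rw [hnorm ζ]
      simp only [hfdef]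
      by_cases h2ζ : |ζ| ≤ 2
      · rw [if_pos h2ζ]
        calc (∏ j, ‖1 - Complex.exp (Complex.I * (η j : ℂ) * (ζ : ℂ))‖) *
              (|ζ| ^ (α - 1) * |Real.sign ζ| / |ζ| ^ (2 * n + 1))
            ≤ (A * |ζ| ^ (2 * n + 1)) * (|ζ| ^ (α - 1) * 1 / |ζ| ^ (2 * n + 1)) := by
              apply mul_le_mul _ _ (by positivity) (by positivity)
              · calc (∏ j, ‖1 - Complex.exp (Complex.I * (η j : ℂ) * (ζ : ℂ))‖)
                    ≤ ∏ j, (|η j| * |ζ|) :=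
                      Finset.prod_le_prod (fun j _ => norm_nonneg _) (fun j _ => hPabs ζ j)
                  _ = A * |ζ| ^ (2 * n + 1) := by
                      rw [Finset.prod_mul_distrib, Finset.prod_const, Finset.card_univ,
                        Fintype.card_fin]
              · gcongr
                exact hsign ζ
          _ = A * |ζ| ^ (α - 1) := by
              have h1 : |ζ| ^ (2 * n + 1) ≠ 0 := pow_ne_zero _ (ne_of_gt habs)
              field_simp
      · rw [if_neg h2ζ]
        push_neg at h2ζ
        calc (∏ j, ‖1 - Complex.exp (Complex.I * (η j : ℂ) * (ζ : ℂ))‖) *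
              (|ζ| ^ (α - 1) * |Real.sign ζ| / |ζ| ^ (2 * n + 1))
            ≤ (2 : ℝ) ^ (2 * n + 1) * (|ζ| ^ (α - 1) * 1 / |ζ| ^ (2 * n + 1)) := by
              apply mul_le_mul _ _ (by positivity) (by positivity)
              · calc (∏ j, ‖1 - Complex.exp (Complex.I * (η j : ℂ) * (ζ : ℂ))‖)
                    ≤ ∏ _j : Fin (2 * n + 1), (2 : ℝ) :=
                      Finset.prod_le_prod (fun j _ => norm_nonneg _) (fun j _ => hP2 ζ j)
                  _ = (2 : ℝ) ^ (2 * n + 1) := by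
                      rw [Finset.prod_const, Finset.card_univ, Fintype.card_fin]
              · gcongr
                exact hsign ζ
          _ = (2 / |ζ|) ^ (2 * n + 1) * |ζ| ^ (α - 1) := by rw [div_pow]; ring
          _ ≤ (2 / |ζ|) ^ 3 * |ζ| ^ (α - 1) := by
              apply mul_le_mul_of_nonneg_right _ (Real.rpow_nonneg (abs_nonneg ζ) _)
              exact pow_le_pow_of_le_one (by positivity)
                (by rw [div_le_one habs]; linarith) hk3
          _ = 8 * (|ζ| ^ (α - 1) / |ζ| ^ (3 : ℕ)) := by ring
          _ = 8 * |ζ| ^ (α - 4) := by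
              rw [← Real.rpow_natCast |ζ| 3, ← Real.rpow_sub habs]
              norm_num
              congr 1
              ring
  -- integrability of the dominating function
  have hf_int : IntegrableOn f (Ioi (0:ℝ)) := by
    have h1 : IntegrableOn (fun t : ℝ => A * t ^ (α - 1)) (Ioc (0:ℝ) 2) := by
      apply Integrable.const_mul
      exact (intervalIntegral.intervalIntegrable_rpow'
        (a := 0) (b := 2) (show (-1:ℝ) < α - 1 by linarith)).1
    have h2' : IntegrableOn (fun t : ℝ => 8 * t ^ (α - 4)) (Ioi (2:ℝ)) :=
      (integrableOn_Ioi_rpow_of_lt (by linarith) (by norm_num)).const_mul 8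
    have hf1 : IntegrableOn f (Ioc (0:ℝ) 2) :=
      h1.congr_fun (fun t ht => (if_pos ht.2).symm) measurableSet_Ioc
    have hf2 : IntegrableOn f (Ioi (2:ℝ)) :=
      h2'.congr_fun (fun t ht => (if_neg (not_le.mpr ht)).symm) measurableSet_Ioi
    have := hf1.union hf2
    rwa [Ioc_union_Ioi_eq_Ioi (by norm_num : (0:ℝ) ≤ 2)] at this
  have hfabs_int : Integrable (fun x : ℝ => f |x|) := by
    have hIoi : IntegrableOn (fun x : ℝ => f |x|) (Ioi 0) :=
      hf_int.congr_fun (fun x hx => by rw [abs_of_pos hx]) measurableSet_Ioi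
    have hIic : IntegrableOn (fun x : ℝ => f |x|) (Iic 0) := by
      have m : MeasurableEmbedding fun x : ℝ => -x := (Homeomorph.neg ℝ).measurableEmbedding
      rw [← Measure.map_neg_eq_self (volume : Measure ℝ)]
      rw [m.integrableOn_map_iff]
      simp_rw [Function.comp_def, abs_neg, neg_preimage, neg_Iic, neg_zero]
      exact (integrableOn_Ici_iff_integrableOn_Ioi).mpr hIoi
    have := hIic.union hIoi
    rwa [Iic_union_Ioi, integrableOn_univ] at this
  -- measurability of F
  have hFmeas : AEStronglyMeasurable F volume := by
    have hc : Continuous fun ζ : ℝ =>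
        ∏ j, (1 - Complex.exp (Complex.I * (η j : ℂ) * (ζ : ℂ))) := by fun_prop
    have hs : Measurable Real.sign := by
      have : Real.sign = fun r : ℝ => if r < 0 then (-1:ℝ) else if 0 < r then 1 else 0 := by
        funext r; rw [Real.sign]
      rw [this]
      exact Measurable.ite measurableSet_Iio measurable_const
        (Measurable.ite measurableSet_Ioi measurable_const measurable_const)
    have hm : Measurable fun ζ : ℝ => (|ζ| ^ (α - 1) * Real.sign ζ / ζ ^ (2 * n + 1) : ℝ) := by
      apply Measurable.div
      · apply Measurable.mul
        · fun_prop
        · exact hs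
      · fun_prop
    exact hc.aestronglyMeasurable.mul
      ((Complex.continuous_ofReal.measurable.comp hm).aestronglyMeasurable)
  have hFint : Integrable F := Integrable.mono' hfabs_int hFmeas (ae_of_all _ hle)
  refine ⟨hFint, ?_⟩
  have hf1 : IntegrableOn f (Ioc (0:ℝ) 2) := hf_int.mono_set Ioc_subset_Ioi_self
  have hf2 : IntegrableOn f (Ioi (2:ℝ)) := hf_int.mono_set (Ioi_subset_Ioi (by norm_num))
  have e1 : ∫ t in Ioc (0:ℝ) 2, f t = A * ((2:ℝ) ^ α / α) := by
    rw [setIntegral_congr_fun measurableSet_Ioc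
      (g := fun t : ℝ => A * t ^ (α - 1)) (fun t ht => if_pos ht.2)]
    rw [MeasureTheory.integral_const_mul]
    congr 1
    rw [← intervalIntegral.integral_of_le (by norm_num : (0:ℝ) ≤ 2)]
    rw [integral_rpow (Or.inl (by linarith))]
    rw [show α - 1 + 1 = α by ring, Real.zero_rpow (ne_of_gt h0)]
    ring
  have e2 : ∫ t in Ioi (2:ℝ), f t = 8 * ((2:ℝ) ^ (α - 3) / (3 - α)) := by
    rw [setIntegral_congr_fun measurableSet_Ioi
      (g := fun t : ℝ => 8 * t ^ (α - 4)) (fun t ht => if_neg (not_le.mpr ht))]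
    rw [MeasureTheory.integral_const_mul]
    rw [integral_Ioi_rpow_of_lt (by linarith) (by norm_num)]
    rw [show α - 4 + 1 = α - 3 by ring]
    rw [show (3:ℝ) - α = -(α - 3) by ring, div_neg, neg_div]
  have p1 : (2:ℝ) ^ (1 + α) = 2 * 2 ^ α := by
    rw [Real.rpow_add two_pos, Real.rpow_one]
  have p2 : (2:ℝ) ^ (1 + α) = 16 * 2 ^ (α - 3) := by
    rw [show (1:ℝ) + α = 4 + (α - 3) by ring, Real.rpow_add two_pos]
    norm_num
  calc ‖∫ ζ : ℝ, F ζ‖ ≤ ∫ ζ : ℝ, f |ζ| := norm_integral_le_of_norm_le hfabs_int (ae_of_all _ hle)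
    _ = 2 * ∫ t in Ioi (0:ℝ), f t := integral_comp_abs (f := f)
    _ = 2 * ((∫ t in Ioc (0:ℝ) 2, f t) + ∫ t in Ioi (2:ℝ), f t) := by
        rw [← setIntegral_union (Ioc_disjoint_Ioi le_rfl) measurableSet_Ioi hf1 hf2,
          Ioc_union_Ioi_eq_Ioi (by norm_num : (0:ℝ) ≤ 2)]
    _ = ((2:ℝ) ^ (1 + α) / α) * A + (2:ℝ) ^ (1 + α) / (3 - α) := by
        have q : (16:ℝ) * 2 ^ (α - 3) = 2 * 2 ^ α := by rw [← p2, p1]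
        rw [e1, e2, p1]
        linear_combination q / (3 - α)
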